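/- With the notation of the coupled Klein–Gordon system, define Γ₁₂(ξ) = ⟨B(e₁)Ω₂(ξ), Ω₁(ξ+k)⟩ · ⟨B(e₋₁)Ω₁(ξ+k), Ω₂(ξ)⟩. Then for every ξ ∈ ℝ^d: Γ₁₂(ξ) = ω₀² / (8 ω λ₁(ξ+k)), and in particular Γ₁₂(ξ) is real and strictly positive. -/

import Mathlib

open Complex

/-- The state space `ℂ^{2(d+2)}` of the coupled Klein–Gordon system, written as
`(u₁,u₂,u₃,v₁,v₂,v₃)` with `u₁,v₁ ∈ ℂ^d` and scalar remaining entries. -/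
abbrev KGV (d : ℕ) := (Fin d → ℂ) × ℂ × ℂ × (Fin d → ℂ) × ℂ × ℂ

namespace KGV

variable {d : ℕ}

def u₁ (U : KGV d) : Fin d → ℂ := U.1
def u₂ (U : KGV d) : ℂ := U.2.1
def u₃ (U : KGV d) : ℂ := U.2.2.1
def v₁ (U : KGV d) : Fin d → ℂ := U.2.2.2.1
def v₂ (U : KGV d) : ℂ := U.2.2.2.2.1
def v₃ (U : KGV d) : ℂ := U.2.2.2.2.2

end KGV

/-- The quadratic nonlinearity `B` of the coupled Klein–Gordon system:
`B(U,U') = (0, (u₂v₂'+u₂'v₂+u₂u₂')/2, 0, 0, (u₃v₃'+u₃'v₃+u₃u₃')/2, 0)`. -/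
noncomputable def KGB {d : ℕ} (U U' : KGV d) : KGV d :=
  (0, (U.u₂ * U'.v₂ + U'.u₂ * U.v₂ + U.u₂ * U'.u₂) / 2, 0,
   0, (U.u₃ * U'.v₃ + U'.u₃ * U.v₃ + U.u₃ * U'.u₃) / 2, 0)

/-- The linearization `B(e)U := B(e,U) + B(U,e)`. -/
noncomputable def KGBop {d : ℕ} (e U : KGV d) : KGV d := KGB e U + KGB U e

/-- The Hermitian inner product `⟨X,Y⟩ = Σ Xᵢ Ȳᵢ` on `ℂ^{2(d+2)}`. -/
noncomputable def KGip {d : ℕ} (X Y : KGV d) : ℂ :=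
  (∑ i : Fin d, X.u₁ i * (starRingEnd ℂ) (Y.u₁ i)) + X.u₂ * (starRingEnd ℂ) Y.u₂
    + X.u₃ * (starRingEnd ℂ) Y.u₃
    + (∑ i : Fin d, X.v₁ i * (starRingEnd ℂ) (Y.v₁ i))
    + X.v₂ * (starRingEnd ℂ) Y.v₂ + X.v₃ * (starRingEnd ℂ) Y.v₃

/-- The polarization vector `e₁ = (1/√2)(k/ω, 1, iω₀/ω, 0, 0, 0)`. -/
noncomputable def KGe1 {d : ℕ} (ω₀ ω : ℝ) (k : EuclideanSpace ℝ (Fin d)) : KGV d :=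
  ((fun i => (Real.sqrt 2 : ℂ)⁻¹ * ((k i : ℂ) / ω)), (Real.sqrt 2 : ℂ)⁻¹,
    (Real.sqrt 2 : ℂ)⁻¹ * (Complex.I * ω₀ / ω), 0, 0, 0)

/-- The conjugate polarization vector `e₋₁ = (1/√2)(−k/ω, 1, −iω₀/ω, 0, 0, 0)`. -/
noncomputable def KGem1 {d : ℕ} (ω₀ ω : ℝ) (k : EuclideanSpace ℝ (Fin d)) : KGV d :=
  ((fun i => (Real.sqrt 2 : ℂ)⁻¹ * (-(k i : ℂ) / ω)), (Real.sqrt 2 : ℂ)⁻¹,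
    (Real.sqrt 2 : ℂ)⁻¹ * (-(Complex.I * ω₀ / ω)), 0, 0, 0)

/-- The orthogonal projector `Π(0)U = (u₁,0,0,v₁,0,0)` onto the zero-frequency eigenspace. -/
def KGP0 {d : ℕ} (U : KGV d) : KGV d := (U.u₁, 0, 0, U.v₁, 0, 0)

/-- A generic element `U₅(ξ) = (u₁, 0, −i(ξ·u₁)/ω₀, v₁, 0, −iθ₀(ξ·v₁)/ω₀)` of the range of
the eigenprojector `Π₅(ξ)` onto the kernel of the symbol. -/
noncomputable def KGU5 {d : ℕ} (ω₀ θ₀ : ℝ) (ξ : EuclideanSpace ℝ (Fin d))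
    (u₁ v₁ : Fin d → ℂ) : KGV d :=
  (u₁, 0, -Complex.I * (∑ i : Fin d, (ξ i : ℂ) * u₁ i) / ω₀,
   v₁, 0, -Complex.I * θ₀ * (∑ i : Fin d, (ξ i : ℂ) * v₁ i) / ω₀)

/-- The unit eigenvector `Ω₁(ζ) = (1/√2)(ζ/λ₁(ζ), 1, iω₀/λ₁(ζ), 0, 0, 0)` of the fast
branch `λ₁(ζ) = √(ω₀²+|ζ|²)`. -/
noncomputable def KGOmega1 {d : ℕ} (ω₀ : ℝ) (ζ : EuclideanSpace ℝ (Fin d)) : KGV d :=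
  ((fun i => (Real.sqrt 2 : ℂ)⁻¹ * ((ζ i : ℂ) / (Real.sqrt (ω₀ ^ 2 + ‖ζ‖ ^ 2) : ℝ))),
    (Real.sqrt 2 : ℂ)⁻¹,
    (Real.sqrt 2 : ℂ)⁻¹ * (Complex.I * ω₀ / (Real.sqrt (ω₀ ^ 2 + ‖ζ‖ ^ 2) : ℝ)), 0, 0, 0)

/-- The unit eigenvector `Ω₂(ζ) = (1/√2)(0,0,0, θ₀ζ/λ₂(ζ), 1, iω₀/λ₂(ζ))` of the slow
branch `λ₂(ζ) = √(ω₀²+θ₀²|ζ|²)`. -/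
noncomputable def KGOmega2 {d : ℕ} (ω₀ θ₀ : ℝ) (ζ : EuclideanSpace ℝ (Fin d)) : KGV d :=
  (0, 0, 0,
    (fun i => (Real.sqrt 2 : ℂ)⁻¹ *
      ((θ₀ * ζ i : ℝ) / (Real.sqrt (ω₀ ^ 2 + θ₀ ^ 2 * ‖ζ‖ ^ 2) : ℝ) : ℝ)),
    (Real.sqrt 2 : ℂ)⁻¹,
    (Real.sqrt 2 : ℂ)⁻¹ *
      (Complex.I * ω₀ / (Real.sqrt (ω₀ ^ 2 + θ₀ ^ 2 * ‖ζ‖ ^ 2) : ℝ)))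

/-- The trace coefficient `Γ₁₂(ξ)`, the product of the two `(1,2)`-interaction
coefficients, equals `ω₀²/(8ωλ₁(ξ+k))`; in particular it is real and strictly positive. -/
theorem KG_Gamma12_positive {d : ℕ} (ω₀ θ₀ : ℝ) (hω₀ : 0 < ω₀)
    (hθ₀ : 0 < θ₀) (hθ₀' : θ₀ < 1) (k : EuclideanSpace ℝ (Fin d))
    (ω : ℝ) (hω : ω = Real.sqrt (ω₀ ^ 2 + ‖k‖ ^ 2)) (ξ : EuclideanSpace ℝ (Fin d)) :
    KGip (KGBop (KGe1 ω₀ ω k) (KGOmega2 ω₀ θ₀ ξ)) (KGOmega1 ω₀ (ξ + k)) *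
        KGip (KGBop (KGem1 ω₀ ω k) (KGOmega1 ω₀ (ξ + k))) (KGOmega2 ω₀ θ₀ ξ) =
      ((ω₀ ^ 2 / (8 * ω * Real.sqrt (ω₀ ^ 2 + ‖ξ + k‖ ^ 2)) : ℝ) : ℂ) ∧
    0 < ω₀ ^ 2 / (8 * ω * Real.sqrt (ω₀ ^ 2 + ‖ξ + k‖ ^ 2)) := by
  have hω' : 0 < ω := by
    rw [hω]; exact Real.sqrt_pos.2 (by positivity)
  have hlam : 0 < Real.sqrt (ω₀ ^ 2 + ‖ξ + k‖ ^ 2) := Real.sqrt_pos.2 (by positivity)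
  have hlam2 : 0 < Real.sqrt (ω₀ ^ 2 + θ₀ ^ 2 * ‖ξ‖ ^ 2) := Real.sqrt_pos.2 (by positivity)
  have h2 : (0:ℝ) < Real.sqrt 2 := Real.sqrt_pos.2 (by norm_num)
  constructor
  · have hωC : (ω:ℂ) ≠ 0 := by exact_mod_cast hω'.ne'
    have hlamC : ((Real.sqrt (ω₀ ^ 2 + ‖ξ + k‖ ^ 2) : ℝ) : ℂ) ≠ 0 := by exact_mod_cast hlam.ne'
    have hlam2C : ((Real.sqrt (ω₀ ^ 2 + θ₀ ^ 2 * ‖ξ‖ ^ 2) : ℝ) : ℂ) ≠ 0 := by exact_mod_cast hlam2.ne'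
    have h2C : ((Real.sqrt 2 : ℝ) : ℂ) ≠ 0 := by exact_mod_cast h2.ne'
    have hsq : ((Real.sqrt 2 : ℝ) : ℂ) * ((Real.sqrt 2 : ℝ) : ℂ) = 2 := by
      have : Real.sqrt 2 * Real.sqrt 2 = 2 := Real.mul_self_sqrt (by norm_num)
      exact_mod_cast this
    simp only [KGip, KGBop, KGB, KGe1, KGem1, KGOmega1, KGOmega2, KGV.u₁, KGV.u₂, KGV.u₃,
      KGV.v₁, KGV.v₂, KGV.v₃, Prod.fst_add, Prod.snd_add, Prod.mk_add_mk, Pi.add_apply]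
    simp only [mul_zero, zero_mul, add_zero, zero_add, map_zero, map_mul, map_inv₀,
      Complex.conj_ofReal, map_ofNat, Complex.conj_I, Finset.sum_const_zero]
    push_cast
    field_simp
    ring_nf
    simp [Complex.I_sq]
    ring_nf
    have e8 : ((Real.sqrt 2 : ℝ) : ℂ)⁻¹ ^ 8 = (16:ℂ)⁻¹ := by
      rw [inv_pow, show (8:ℕ)=2*4 from rfl, pow_mul, sq, hsq]; norm_num
    have e6 : ((Real.sqrt 2 : ℝ) : ℂ) ^ 6 = 8 := by
      have : ((Real.sqrt 2 : ℝ) : ℂ) ^ 6 = (((Real.sqrt 2 : ℝ) : ℂ) * ((Real.sqrt 2 : ℝ) : ℂ)) ^ 3 := by ring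
      rw [this, hsq]; norm_num
    rw [e6]
    ring
  · positivity
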